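/- Let R be a commutative ring with total quotient ring K = T(R), and identify R with its image in K. For all f, g ∈ K[X], the polynomial F = f̄ + ḡ·ε ∈ K[ε][X] (where f̄, ḡ are the coefficientwise inclusions of f, g into K[ε][X]) satisfies F(z) ∈ R[ε] for every z ∈ R[ε] if and only if f ∈ Int(R), f′ ∈ Int(R), and g ∈ Int(R). In other words, Int(R[ε]) = Int^(1)(R) + Int(R)·ε. -/

import Mathlib

open Polynomial TrivSqZeroExt

/-- The set `Int(R)` of integer-valued polynomials on `R`: polynomials with coefficients
in the total quotient ring `K = T(R)` (realized as `FractionRing R`) mapping (the image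
of) `R` into (the image of) `R`. -/
def IntPoly (R : Type*) [CommRing R] : Set (Polynomial (FractionRing R)) :=
  {f | ∀ r : R, f.eval (algebraMap R (FractionRing R) r) ∈ Set.range (algebraMap R (FractionRing R))}

/-- Membership in the subring `R[ε]` of `K[ε]`, `K = T(R)`: both components lie in the
image of `R`. -/
def MemDualR (R : Type*) [CommRing R] (z : DualNumber (FractionRing R)) : Prop :=
  z.fst ∈ Set.range (algebraMap R (FractionRing R)) ∧
    z.snd ∈ Set.range (algebraMap R (FractionRing R))

/-- Evaluating a coefficientwise-included polynomial at `a + bε`. -/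
lemma key_eval {K : Type*} [CommRing K] (p : K[X]) (a b : K) :
    (p.map (inlHom K K)).eval (inl a + inr b) =
      inl (p.eval a) + inr (b * (derivative p).eval a) := by
  induction p using Polynomial.induction_on' with
  | add p q hp hq =>
      rw [Polynomial.map_add, eval_add, hp, hq]
      simp only [derivative_add, eval_add, mul_add, inr_add, inl_add]
      abel
  | monomial n c =>
      rw [map_monomial, eval_monomial, derivative_monomial, eval_monomial]
      refine TrivSqZeroExt.ext ?_ ?_
      · simp [snd_pow, smul_eq_mul]
      · simp only [snd_mul, fst_pow, fst_add, fst_inl, fst_inr, add_zero, snd_pow,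
          snd_add, snd_inl, snd_inr, zero_add, smul_eq_mul, op_smul_eq_smul,
          mul_zero, inlHom_apply, Nat.pred_eq_sub_one, eval_monomial, nsmul_eq_mul]
        ring

lemma key_eval' {K : Type*} [CommRing K] (f g : K[X]) (a b : K) :
    (f.map (inlHom K K) + g.map (inlHom K K) * C DualNumber.eps).eval (inl a + inr b) =
      inl (f.eval a) + inr (b * (derivative f).eval a + g.eval a) := by
  rw [eval_add, eval_mul, eval_C, key_eval, key_eval, DualNumber.eps]
  refine TrivSqZeroExt.ext ?_ ?_ <;>
    simp [fst_mul, snd_mul, smul_eq_mul, op_smul_eq_smul, mul_comm]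

/-- For `f, g ∈ K[X]` (where `K = T(R)`), the polynomial
`F = f̄ + ḡ·ε ∈ K[ε][X]` maps `R[ε]` into `R[ε]` if and only if `f ∈ Int(R)`,
`f′ ∈ Int(R)` and `g ∈ Int(R)`.  That is, `Int(R[ε]) = Int⁽¹⁾(R) + Int(R)·ε`. -/
theorem intPoly_dualNumber (R : Type*) [CommRing R] (f g : Polynomial (FractionRing R)) :
    (∀ x y : R,
        MemDualR R
          ((f.map (inlHom (FractionRing R) (FractionRing R))
              + g.map (inlHom (FractionRing R) (FractionRing R)) * C DualNumber.eps).eval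
            (inl (algebraMap R (FractionRing R) x) + inr (algebraMap R (FractionRing R) y))))
      ↔ f ∈ IntPoly R ∧ derivative f ∈ IntPoly R ∧ g ∈ IntPoly R := by
  set φ := algebraMap R (FractionRing R)
  have hmem : ∀ x y : R,
      MemDualR R ((f.map (inlHom (FractionRing R) (FractionRing R))
          + g.map (inlHom (FractionRing R) (FractionRing R)) * C DualNumber.eps).eval
        (inl (φ x) + inr (φ y)))
      ↔ (f.eval (φ x) ∈ Set.range φ ∧
          φ y * (derivative f).eval (φ x) + g.eval (φ x) ∈ Set.range φ) := by
    intro x y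
    rw [key_eval']
    unfold MemDualR
    simp [fst_inl, fst_inr, snd_inl, snd_inr]
    exact Iff.rfl
  constructor
  · intro h
    have hf : f ∈ IntPoly R := fun x => ((hmem x 0).1 (h x 0)).1
    have hg : g ∈ IntPoly R := by
      intro x
      have := ((hmem x 0).1 (h x 0)).2
      simpa using this
    refine ⟨hf, ?_, hg⟩
    intro x
    have h1 := ((hmem x 1).1 (h x 1)).2
    obtain ⟨s, hs⟩ := h1
    obtain ⟨t, ht⟩ := hg x
    refine ⟨s - t, ?_⟩
    rw [map_sub, hs, ht]
    simp
    exact add_sub_cancel_right _ _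
  · rintro ⟨hf, hf', hg⟩ x y
    rw [hmem]
    refine ⟨hf x, ?_⟩
    obtain ⟨s, hs⟩ := hf' x
    obtain ⟨t, ht⟩ := hg x
    exact ⟨y * s + t, by rw [map_add, map_mul, hs, ht]⟩
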